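/- arXiv:1303.1829 — 8 statements merged into one kernel-verified Lean document; each statement's English description precedes it below -/
import Mathlib

section
/- The operator γ_e = δ_en ∘ ε_ne is an (algebraic) opening on edge weights: it is increasing (e ≤ e' on adjacent pairs implies γ_e e ≤ γ_e e' on adjacent pairs), anti-extensive ((γ_e e) i j ≤ e i j for all adjacent i, j), and idempotent ((γ_e (γ_e e)) i j = (γ_e e) i j for all adjacent i, j). -/
/-- The erosion from edge weights to node weights:
`(ε_ne e) i` is the minimum of `e i j` over the neighbors `j` of `i`. -/
noncomputable def epsNE {V : Type*} [Fintype V] (G : SimpleGraph V) [DecidableRel G.Adj]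
    (h : ∀ i : V, ∃ j, G.Adj i j) (e : V → V → ℝ) (i : V) : ℝ :=
  (G.neighborFinset i).inf'
    ⟨(h i).choose, by rw [SimpleGraph.mem_neighborFinset]; exact (h i).choose_spec⟩
    (fun j => e i j)

/-- The opening `γ_e = δ_en ∘ ε_ne` on edge weights:
`(γ_e e) i j = max ((ε_ne e) i) ((ε_ne e) j)`. -/
noncomputable def gammaE {V : Type*} [Fintype V] (G : SimpleGraph V) [DecidableRel G.Adj]
    (h : ∀ i : V, ∃ j, G.Adj i j) (e : V → V → ℝ) (i j : V) : ℝ :=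
  max (epsNE G h e i) (epsNE G h e j)

section Aux
variable {V : Type*} [Fintype V] (G : SimpleGraph V) [DecidableRel G.Adj]
  (h : ∀ i : V, ∃ j, G.Adj i j)

lemma epsNE_le {e : V → V → ℝ} {i j : V} (hij : G.Adj i j) :
    epsNE G h e i ≤ e i j :=
  Finset.inf'_le _ (by rw [SimpleGraph.mem_neighborFinset]; exact hij)

lemma le_epsNE {e : V → V → ℝ} {i : V} {a : ℝ}
    (ha : ∀ j, G.Adj i j → a ≤ e i j) : a ≤ epsNE G h e i :=
  Finset.le_inf' _ _ fun j hj => ha j (by rwa [SimpleGraph.mem_neighborFinset] at hj)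

lemma epsNE_mono {e e' : V → V → ℝ} (he : ∀ i j, G.Adj i j → e i j ≤ e' i j)
    (i : V) : epsNE G h e i ≤ epsNE G h e' i :=
  le_epsNE G h fun j hj => le_trans (epsNE_le G h hj) (he i j hj)

lemma gammaE_le {e : V → V → ℝ} (hsym : ∀ i j, G.Adj i j → e i j = e j i)
    {i j : V} (hij : G.Adj i j) : gammaE G h e i j ≤ e i j :=
  max_le (epsNE_le G h hij) (by rw [hsym i j hij]; exact epsNE_le G h hij.symm)

lemma gammaE_symm (e : V → V → ℝ) (i j : V) :
    gammaE G h e i j = gammaE G h e j i := max_comm _ _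

lemma epsNE_le_epsNE_gammaE (e : V → V → ℝ) (i : V) :
    epsNE G h e i ≤ epsNE G h (gammaE G h e) i :=
  le_epsNE G h fun j _ => le_max_left _ _

end Aux

/-- The operator `γ_e = δ_en ∘ ε_ne` is an algebraic opening on edge weights:
it is increasing, anti-extensive and idempotent (on adjacent pairs). -/
theorem gammaE_is_opening {V : Type*} [Fintype V] (G : SimpleGraph V)
    [DecidableRel G.Adj] (h : ∀ i : V, ∃ j, G.Adj i j) :
    (∀ e e' : V → V → ℝ, (∀ i j, G.Adj i j → e i j = e j i) →
      (∀ i j, G.Adj i j → e' i j = e' j i) →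
      (∀ i j, G.Adj i j → e i j ≤ e' i j) →
      ∀ i j, G.Adj i j → gammaE G h e i j ≤ gammaE G h e' i j) ∧
    (∀ e : V → V → ℝ, (∀ i j, G.Adj i j → e i j = e j i) →
      ∀ i j, G.Adj i j → gammaE G h e i j ≤ e i j) ∧
    (∀ e : V → V → ℝ, (∀ i j, G.Adj i j → e i j = e j i) →
      ∀ i j, G.Adj i j → gammaE G h (gammaE G h e) i j = gammaE G h e i j) := by
  refine ⟨fun e e' _ _ hle i j _ =>
    max_le_max (epsNE_mono G h hle i) (epsNE_mono G h hle j),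
    fun e hsym i j hij => gammaE_le G h hsym hij,
    fun e hsym i j hij => ?_⟩
  have hsym' : ∀ i j, G.Adj i j → gammaE G h e i j = gammaE G h e j i :=
    fun i j _ => gammaE_symm G h e i j
  refine le_antisymm ?_ ?_
  · have hle : ∀ a b, G.Adj a b → gammaE G h e a b ≤ e a b :=
      fun a b hab => gammaE_le G h hsym hab
    exact max_le
      (le_trans (epsNE_mono G h hle i) (le_max_left _ _))
      (le_trans (epsNE_mono G h hle j) (le_max_right _ _))
  · exact max_le_max (epsNE_le_epsNE_gammaE G h e i) (epsNE_le_epsNE_gammaE G h e j)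
end

section
/- An edge is invariant under the opening γ_e exactly when it is a lowest edge of one of its extremities: for adjacent vertices i, j, one has (γ_e e) i j = e i j if and only if e i j = (ε_ne e) i or e i j = (ε_ne e) j; otherwise (γ_e e) i j < e i j. -/
/-- An edge is invariant under the opening `γ_e` exactly when it is a lowest edge of
one of its extremities; otherwise its weight is strictly lowered by the opening. -/
theorem gammaE_invariant_iff_lowest_edge {V : Type*} [Fintype V] (G : SimpleGraph V)
    [DecidableRel G.Adj] (h : ∀ i : V, ∃ j, G.Adj i j)
    (e : V → V → ℝ) (hsymm : ∀ i j, G.Adj i j → e i j = e j i) :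
    ∀ i j, G.Adj i j →
      ((gammaE G h e i j = e i j ↔ (e i j = epsNE G h e i ∨ e i j = epsNE G h e j)) ∧
       (¬ (e i j = epsNE G h e i ∨ e i j = epsNE G h e j) → gammaE G h e i j < e i j)) := by
  intro i j hij
  have hi : epsNE G h e i ≤ e i j := by
    apply Finset.inf'_le
    rwa [SimpleGraph.mem_neighborFinset]
  have hj : epsNE G h e j ≤ e i j := by
    rw [hsymm i j hij]
    apply Finset.inf'_le
    rwa [SimpleGraph.mem_neighborFinset, SimpleGraph.adj_comm]
  have hle : gammaE G h e i j ≤ e i j := max_le hi hj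
  constructor
  · constructor
    · intro heq
      rcases max_cases (epsNE G h e i) (epsNE G h e j) with ⟨h1,_⟩|⟨h1,_⟩
      · left; rw [← heq, gammaE, h1]
      · right; rw [← heq, gammaE, h1]
    · rintro (heq|heq)
      · exact le_antisymm hle (heq ▸ le_max_left _ _)
      · exact le_antisymm hle (heq ▸ le_max_right _ _)
  · intro hne
    push_neg at hne
    exact max_lt (lt_of_le_of_ne hi (Ne.symm hne.1)) (lt_of_le_of_ne hj (Ne.symm hne.2))
end

section
/- In a flooding graph, flooding paths and flooding chains coincide: if (n, e) is a flooding graph on G, then a finite path p_1, …, p_m in G is a flooding path (n p_1 ≥ n p_2 ≥ … ≥ n p_m) if and only if it is a flooding chain (each edge (p_k, p_{k+1}) satisfies e p_k p_{k+1} = (ε_ne e) p_k and the weights e p_k p_{k+1} are non-increasing in k); moreover in that case e p_k p_{k+1} = n p_k for every k. -/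
/-- `(n, e)` is a flooding graph on `G`: each edge carries the maximum of the weights of
its extremities and each node carries the minimum weight of its adjacent edges. -/
def IsFloodingGraph {V : Type*} [Fintype V] (G : SimpleGraph V) [DecidableRel G.Adj]
    (h : ∀ i : V, ∃ j, G.Adj i j) (n : V → ℝ) (e : V → V → ℝ) : Prop :=
  (∀ i j, G.Adj i j → e i j = max (n i) (n j)) ∧ (∀ i, n i = epsNE G h e i)

/-- In a flooding graph, flooding paths and flooding chains coincide: a finite path
`p 0, …, p m` in `G` has non-increasing node weights iff each of its edges is a lowest
edge of its origin with non-increasing edge weights; moreover in that case each edge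
weight equals the node weight of its origin. -/
theorem floodingGraph_path_iff_chain {V : Type*} [Fintype V] (G : SimpleGraph V)
    [DecidableRel G.Adj] (h : ∀ i : V, ∃ j, G.Adj i j)
    (n : V → ℝ) (e : V → V → ℝ) (hfg : IsFloodingGraph G h n e)
    (m : ℕ) (p : ℕ → V) (hpath : ∀ k < m, G.Adj (p k) (p (k + 1))) :
    ((∀ k < m, n (p (k + 1)) ≤ n (p k)) ↔
      ((∀ k < m, e (p k) (p (k + 1)) = epsNE G h e (p k)) ∧
       (∀ k, k + 1 < m → e (p (k + 1)) (p (k + 2)) ≤ e (p k) (p (k + 1))))) ∧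
    ((∀ k < m, n (p (k + 1)) ≤ n (p k)) →
      ∀ k < m, e (p k) (p (k + 1)) = n (p k)) := by
  obtain ⟨he, hn⟩ := hfg
  have key : ∀ k < m, e (p k) (p (k + 1)) = max (n (p k)) (n (p (k + 1))) :=
    fun k hk => he _ _ (hpath k hk)
  have part2 : (∀ k < m, n (p (k + 1)) ≤ n (p k)) →
      ∀ k < m, e (p k) (p (k + 1)) = n (p k) := by
    intro hmono k hk
    rw [key k hk, max_eq_left (hmono k hk)]
  refine ⟨⟨fun hmono => ?_, fun ⟨h1, _⟩ k hk => ?_⟩, part2⟩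
  · constructor
    · intro k hk
      rw [part2 hmono k hk, hn (p k)]
    · intro k hk
      have hk' : k < m := Nat.lt_of_succ_lt hk
      rw [part2 hmono k hk', part2 hmono (k + 1) hk]
      exact hmono k hk'
  · have := h1 k hk
    rw [key k hk, ← hn (p k)] at this
    exact max_eq_left_iff.mp this
end

section
/- In a flooding graph the catchment basins for node weights and for edge weights are identical: if (n, e) is a flooding graph on G and S ⊆ V, then the set of vertices joined to some vertex of S by a flooding path equals the set of vertices joined to some vertex of S by a flooding chain. -/
/-- In a flooding graph the catchment basins for node weights and for edge weights are
identical: the set of vertices joined to `S` by a flooding path (a path with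
non-increasing node weights) equals the set of vertices joined to `S` by a flooding
chain (a path whose edges are lowest edges of their origins, with non-increasing edge
weights). -/
theorem floodingGraph_basins_eq {V : Type*} [Fintype V] (G : SimpleGraph V)
    [DecidableRel G.Adj] (h : ∀ i : V, ∃ j, G.Adj i j)
    (n : V → ℝ) (e : V → V → ℝ) (hfg : IsFloodingGraph G h n e) (S : Set V) :
    {v : V | ∃ (m : ℕ) (p : ℕ → V), p 0 = v ∧ p m ∈ S ∧
        (∀ k < m, G.Adj (p k) (p (k + 1)) ∧ n (p (k + 1)) ≤ n (p k))} =
    {v : V | ∃ (m : ℕ) (p : ℕ → V), p 0 = v ∧ p m ∈ S ∧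
        (∀ k < m, G.Adj (p k) (p (k + 1)) ∧ e (p k) (p (k + 1)) = epsNE G h e (p k)) ∧
        (∀ k, k + 1 < m → e (p (k + 1)) (p (k + 2)) ≤ e (p k) (p (k + 1)))} := by
  obtain ⟨he, hn⟩ := hfg
  ext v
  simp only [Set.mem_setOf_eq]
  constructor
  · rintro ⟨m, p, h0, hS, hstep⟩
    refine ⟨m, p, h0, hS, fun k hk => ⟨(hstep k hk).1, ?_⟩, fun k hk => ?_⟩
    · rw [he _ _ (hstep k hk).1, max_eq_left (hstep k hk).2, hn]
    · have h1 := hstep k (by omega)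
      have h2 := hstep (k + 1) hk
      rw [he _ _ h1.1, he _ _ h2.1, max_eq_left h1.2, max_eq_left h2.2]
      exact h1.2
  · rintro ⟨m, p, h0, hS, hstep, -⟩
    refine ⟨m, p, h0, hS, fun k hk => ⟨(hstep k hk).1, ?_⟩⟩
    have hmax : max (n (p k)) (n (p (k + 1))) = n (p k) := by
      rw [← he _ _ (hstep k hk).1, (hstep k hk).2, ← hn]
    calc n (p (k + 1)) ≤ max (n (p k)) (n (p (k + 1))) := le_max_right _ _
      _ = n (p k) := hmax
end

section
/- Any node-weighted graph without isolated regional minima becomes a flooding graph when each edge receives the maximum of the weights of its extremities: if every vertex i of (G, n) has at least one neighbor j with n j ≤ n i, then, setting e = δ_en n (i.e. e i j = max (n i) (n j) for adjacent i, j), the pair (n, e) is a flooding graph on G. -/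
/-- A node-weighted graph without isolated regional minima becomes a flooding graph
when each edge receives the maximum of the weights of its extremities: if every vertex
has a neighbor with node weight not larger than its own, then `(n, δ_en n)` is a
flooding graph on `G`. -/
theorem nodeWeighted_to_flooding {V : Type*} [Fintype V] (G : SimpleGraph V)
    [DecidableRel G.Adj] (h : ∀ i : V, ∃ j, G.Adj i j)
    (n : V → ℝ) (hmin : ∀ i, ∃ j, G.Adj i j ∧ n j ≤ n i) :
    IsFloodingGraph G h n (fun i j => max (n i) (n j)) := by
  constructor
  · intro i j _; rfl
  · intro i
    obtain ⟨j, hij, hji⟩ := hmin i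
    apply le_antisymm
    · apply Finset.le_inf'
      intro b _; exact le_max_left _ _
    · apply Finset.inf'_le_of_le (b := j)
      · rwa [SimpleGraph.mem_neighborFinset]
      · exact max_le le_rfl hji
end

section
/- Catchment basins of increasing lexicographic depth are nested: define the depth-k catchment basin of a set S ⊆ V as the set of vertices p for which there exists a k-steepest non-ascending infinite walk π from p with π t ∈ S for some t. Then for all natural numbers k ≤ l, the depth-l catchment basin of S is contained in the depth-k catchment basin of S. -/
/-- `π` is a non-ascending infinite walk from `p` in `(G, n)`. -/
def NAWalk {V : Type*} (G : SimpleGraph V) (n : V → ℝ) (p : V) (π : ℕ → V) : Prop :=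
  π 0 = p ∧ ∀ t, (π (t + 1) = π t ∨ G.Adj (π t) (π (t + 1))) ∧ n (π (t + 1)) ≤ n (π t)

/-- `π ⪯^k χ`: lexicographic comparison of the first `k` node weights. -/
def lexLE {V : Type*} (n : V → ℝ) (k : ℕ) (π χ : ℕ → V) : Prop :=
  (∀ t < k, n (π t) = n (χ t)) ∨
  ∃ t < k, (∀ s < t, n (π s) = n (χ s)) ∧ n (π t) < n (χ t)

/-- The depth-`k` catchment basin of `S`: the vertices `p` from which some `k`-steepest
non-ascending infinite walk reaches `S`. -/
def basin {V : Type*} (G : SimpleGraph V) (n : V → ℝ) (k : ℕ) (S : Set V) : Set V :=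
  {p : V | ∃ π : ℕ → V, NAWalk G n p π ∧
    (∀ χ : ℕ → V, NAWalk G n p χ → lexLE n k π χ) ∧ ∃ t, π t ∈ S}

/-- Catchment basins of increasing lexicographic depth are nested: for `k ≤ l`, the
depth-`l` catchment basin of `S` is contained in the depth-`k` catchment basin of `S`. -/
theorem basins_nested {V : Type*} [Fintype V] (G : SimpleGraph V)
    (h : ∀ i : V, ∃ j, G.Adj i j) (n : V → ℝ) (S : Set V)
    (k l : ℕ) (hkl : k ≤ l) :
    basin G n l S ⊆ basin G n k S := by
  rintro p ⟨π, hπ, hsteep, t, ht⟩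
  refine ⟨π, hπ, fun χ hχ => ?_, t, ht⟩
  rcases hsteep χ hχ with he | ⟨u, hul, heq, hlt⟩
  · exact Or.inl fun s hs => he s (lt_of_lt_of_le hs hkl)
  · rcases lt_or_ge u k with hu | hu
    · exact Or.inr ⟨u, hu, heq, hlt⟩
    · exact Or.inl fun s hs => heq s (lt_of_lt_of_le hs hu)
end

section
/- A suffix of a steepest walk is steepest: if π is a non-ascending infinite walk such that π ⪯ χ for every non-ascending infinite walk χ from π 0, then for every l ∈ ℕ the shifted walk π_l defined by π_l t = π (t + l) satisfies π_l ⪯ σ for every non-ascending infinite walk σ from π l. -/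
/-- `π ⪯ χ`: `π ⪯^k χ` for every depth `k`. -/
def lexLEInf {V : Type*} (n : V → ℝ) (π χ : ℕ → V) : Prop :=
  ∀ k : ℕ, lexLE n k π χ

/-- A suffix of a steepest walk is steepest: if `π` is a non-ascending infinite walk
with `π ⪯ χ` for every non-ascending infinite walk `χ` from `π 0`, then for every `l`
the shifted walk `t ↦ π (t + l)` satisfies `π_l ⪯ σ` for every non-ascending infinite
walk `σ` from `π l`. -/
theorem steepest_suffix {V : Type*} [Fintype V] (G : SimpleGraph V)
    (h : ∀ i : V, ∃ j, G.Adj i j) (n : V → ℝ) (π : ℕ → V)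
    (hπ : NAWalk G n (π 0) π)
    (hsteep : ∀ χ : ℕ → V, NAWalk G n (π 0) χ → lexLEInf n π χ) (l : ℕ) :
    ∀ σ : ℕ → V, NAWalk G n (π l) σ → lexLEInf n (fun t => π (t + l)) σ := by
  intro σ hσ k
  set χ : ℕ → V := fun t => if t < l then π t else σ (t - l) with hχdef
  have hχl : ∀ s, χ (l + s) = σ s := by
    intro s
    have : ¬ l + s < l := by omega
    simp [hχdef, this]
  have hχlt : ∀ t < l, χ t = π t := by
    intro t ht; simp [hχdef, ht]
  have hχwalk : NAWalk G n (π 0) χ := by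
    constructor
    · rcases Nat.eq_zero_or_pos l with hl | hl
      · have := hσ.1
        subst hl
        simpa [hχdef] using this
      · simp [hχdef, hl]
    · intro t
      rcases lt_trichotomy (t + 1) l with hc | hc | hc
      · have ht : t < l := by omega
        rw [hχlt _ hc, hχlt _ ht]
        exact hπ.2 t
      · have ht : t < l := by omega
        have h1 : χ (t + 1) = σ 0 := by
          have := hχl 0
          simpa [hc] using this
        rw [h1, hσ.1, hχlt _ ht, ← hc]
        exact hπ.2 t
      · have h1 : χ (t + 1) = σ (t - l + 1) := by
          have := hχl (t - l + 1)
          rw [← this]; congr 1; omega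
        have h2 : χ t = σ (t - l) := by
          have := hχl (t - l)
          rw [← this]; congr 1; omega
        rw [h1, h2]
        exact hσ.2 (t - l)
  have hlex := hsteep χ hχwalk (l + k)
  rcases hlex with h1 | ⟨t, ht, heq, hlt⟩
  · left
    intro t ht
    have := h1 (l + t) (by omega)
    rw [hχl] at this
    simpa [Nat.add_comm] using this
  · by_cases htl : t < l
    · exact absurd hlt (by rw [hχlt _ htl]; exact lt_irrefl _)
    · right
      refine ⟨t - l, by omega, ?_, ?_⟩
      · intro s hs
        have := heq (l + s) (by omega)
        rw [hχl] at this
        simpa [Nat.add_comm] using this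
      · have h2 : χ t = σ (t - l) := by
          have := hχl (t - l)
          rw [← this]; congr 1; omega
        rw [h2] at hlt
        simpa [Nat.sub_add_cancel (le_of_not_gt htl)] using hlt
end

section
/- Any oriented path of length k in the depth-k pruned graph is of maximal steepness for the depth-k lexicographic order: if p_0, p_1, …, p_k are vertices such that (p_i, p_{i+1}) ∈ ↓^k for every i < k, then for every non-ascending infinite walk χ from p_0, the k-tuple (n p_0, n p_1, …, n p_{k−1}) is less than or equal to (n (χ 0), n (χ 1), …, n (χ (k−1))) in the lexicographic order. -/
/-- The depth-`k` pruned arrow set `↓^k`: the pairs `(p, q)` such that some `k`-steepest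
non-ascending infinite walk from `p` has `q` as its second vertex. -/
def prunedArrows {V : Type*} (G : SimpleGraph V) (n : V → ℝ) (k : ℕ) : Set (V × V) :=
  {pq : V × V | ∃ π : ℕ → V, NAWalk G n pq.1 π ∧ π 1 = pq.2 ∧
    ∀ χ : ℕ → V, NAWalk G n pq.1 χ → lexLE n k π χ}

lemma lexLE_mono {V : Type*} (n : V → ℝ) {m k : ℕ} (h : m ≤ k) {a b : ℕ → V}
    (hab : lexLE n k a b) : lexLE n m a b := by
  rcases hab with h1 | ⟨t, ht, he, hlt⟩
  · exact Or.inl fun t htm => h1 t (htm.trans_le h)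
  · by_cases htm : t < m
    · exact Or.inr ⟨t, htm, he, hlt⟩
    · exact Or.inl fun s hs => he s (hs.trans_le (le_of_not_gt htm))

lemma lexLE_trans {V : Type*} (n : V → ℝ) {k : ℕ} {a b c : ℕ → V}
    (h1 : lexLE n k a b) (h2 : lexLE n k b c) : lexLE n k a c := by
  rcases h1 with e1 | ⟨t1, ht1, e1, l1⟩
  · rcases h2 with e2 | ⟨t2, ht2, e2, l2⟩
    · exact Or.inl fun t ht => (e1 t ht).trans (e2 t ht)
    · exact Or.inr ⟨t2, ht2, fun s hs => (e1 s (hs.trans ht2)).trans (e2 s hs),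
        (e1 t2 ht2).trans_lt l2⟩
  · rcases h2 with e2 | ⟨t2, ht2, e2, l2⟩
    · exact Or.inr ⟨t1, ht1, fun s hs => (e1 s hs).trans (e2 s (hs.trans ht1)),
        l1.trans_eq (e2 t1 ht1)⟩
    · rcases lt_trichotomy t1 t2 with hlt | heq | hgt
      · exact Or.inr ⟨t1, ht1, fun s hs => (e1 s hs).trans (e2 s (hs.trans hlt)),
          l1.trans_eq (e2 t1 hlt)⟩
      · subst heq
        exact Or.inr ⟨t1, ht1, fun s hs => (e1 s hs).trans (e2 s hs), l1.trans l2⟩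
      · exact Or.inr ⟨t2, ht2, fun s hs => (e1 s (hs.trans hgt)).trans (e2 s hs),
          (e1 t2 hgt).trans_lt l2⟩

lemma lexLE_cons {V : Type*} (n : V → ℝ) {j : ℕ} {a b : ℕ → V} (h0 : n (a 0) = n (b 0))
    (h : lexLE n j (fun t => a (t + 1)) (fun t => b (t + 1))) : lexLE n (j + 1) a b := by
  rcases h with e | ⟨t, ht, e, l⟩
  · refine Or.inl fun t ht => ?_
    cases t with
    | zero => exact h0
    | succ s => exact e s (Nat.succ_lt_succ_iff.mp ht)
  · refine Or.inr ⟨t + 1, Nat.succ_lt_succ ht, ?_, l⟩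
    intro s hs
    cases s with
    | zero => exact h0
    | succ r => exact e r (Nat.succ_lt_succ_iff.mp hs)

/-- Any oriented path of length `k` in the depth-`k` pruned graph is of maximal
steepness for the depth-`k` lexicographic order: if each consecutive pair of
`p 0, p 1, …, p k` lies in `↓^k`, then `(n (p 0), …, n (p (k−1)))` is lexicographically
less than or equal to `(n (χ 0), …, n (χ (k−1)))` for every non-ascending infinite walk
`χ` from `p 0`. -/
theorem prunedPath_maximal_steepness {V : Type*} [Fintype V] (G : SimpleGraph V)
    (h : ∀ i : V, ∃ j, G.Adj i j) (n : V → ℝ) (k : ℕ) (p : ℕ → V)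
    (hp : ∀ i < k, (p i, p (i + 1)) ∈ prunedArrows G n k) :
    ∀ χ : ℕ → V, NAWalk G n (p 0) χ → lexLE n k p χ := by
  have key : ∀ j i, i + j = k → ∀ χ, NAWalk G n (p i) χ →
      lexLE n j (fun t => p (i + t)) χ := by
    intro j
    induction j with
    | zero => exact fun i _ χ _ => Or.inl fun t ht => absurd ht (Nat.not_lt_zero t)
    | succ j ih =>
      intro i hik χ hχ
      obtain ⟨π, hπ, hπ1, hsteep⟩ := hp i (by omega)
      have h1 : lexLE n (j + 1) π χ := lexLE_mono n (by omega) (hsteep χ hχ)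
      have hshift : NAWalk G n (p (i + 1)) (fun t => π (t + 1)) :=
        ⟨hπ1, fun t => hπ.2 (t + 1)⟩
      have h2 := ih (i + 1) (by omega) _ hshift
      have h3 : lexLE n (j + 1) (fun t => p (i + t)) π := by
        apply lexLE_cons
        · simp [hπ.1]
        · have heq : (fun t => p (i + (t + 1))) = fun t => p (i + 1 + t) := by
            funext t; congr 1; omega
          simpa [heq] using h2
      exact lexLE_trans n h3 h1
  intro χ hχ
  simpa using key k 0 (by omega) χ hχ
end
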